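/- Let S be a GPT state space in ℝ^{d+1} and 𝓔 a GPT effect space for S. The GPT system (S, 𝓔) satisfies intermediate determinism if and only if both: (i) for every pair of distinct actual faces F and F' of the unrestricted effect space E(S), the intersection F ∩ 𝓔 is not a subset of F' ∩ 𝓔; and (ii) every extreme point of S is an exposed point of S. -/

import Mathlib

namespace GPT

/-- Euclidean dot product on `Fin n → ℝ`. -/
def dot {n : ℕ} (x y : Fin n → ℝ) : ℝ := ∑ i, x i * y i

/-- The unit effect `u = (0, …, 0, 1)` in `ℝ^{d+1}`. -/
def unit (d : ℕ) : Fin (d + 1) → ℝ := fun i => if i = Fin.last d then 1 else 0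

/-- A GPT state space: a nonempty compact convex subset of `ℝ^{d+1}` whose elements all have
last coordinate equal to `1`. -/
def IsStateSpace (d : ℕ) (S : Set (Fin (d + 1) → ℝ)) : Prop :=
  S.Nonempty ∧ IsCompact S ∧ Convex ℝ S ∧ ∀ ω ∈ S, ω (Fin.last d) = 1

/-- The unrestricted effect space `E(S)` of a state space `S`. -/
def unrestricted (d : ℕ) (S : Set (Fin (d + 1) → ℝ)) : Set (Fin (d + 1) → ℝ) :=
  {e | ∀ ω ∈ S, 0 ≤ dot e ω ∧ dot e ω ≤ 1}

/-- A GPT effect space for the state space `S`. -/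
def IsEffectSpace (d : ℕ) (S E : Set (Fin (d + 1) → ℝ)) : Prop :=
  E ⊆ unrestricted d S ∧ Convex ℝ E ∧ (0 : Fin (d + 1) → ℝ) ∈ E ∧ unit d ∈ E ∧
    (∀ e ∈ E, unit d - e ∈ E) ∧ Submodule.span ℝ E = ⊤

/-- `W(𝓔)`: the set of all mathematically reasonable states for the effect space `𝓔`. -/
def W (d : ℕ) (E : Set (Fin (d + 1) → ℝ)) : Set (Fin (d + 1) → ℝ) :=
  {ω | (∀ e ∈ E, dot ω e ≤ 1) ∧ dot ω (unit d) = 1}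

/-- The actual set `A^X_ω` of `ω` in a set of effects `X`. -/
def actualSet {n : ℕ} (X : Set (Fin n → ℝ)) (ω : Fin n → ℝ) : Set (Fin n → ℝ) :=
  {e ∈ X | dot e ω = 1}

/-- An exposed face of a convex set `C`: a nonempty set of the form
`C ∩ {x : h·x = m}` with `h ≠ 0` and `h·c ≤ m` for all `c ∈ C`. -/
def IsExposedFace {n : ℕ} (C F : Set (Fin n → ℝ)) : Prop :=
  F.Nonempty ∧ ∃ (h : Fin n → ℝ) (m : ℝ), h ≠ 0 ∧ (∀ c ∈ C, dot h c ≤ m) ∧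
    F = {x ∈ C | dot h x = m}

/-- An exposed point of a convex set. -/
def IsExposedPoint {n : ℕ} (C : Set (Fin n → ℝ)) (x : Fin n → ℝ) : Prop :=
  IsExposedFace C {x}

/-- An actual face of an effect space `E`: an exposed face containing the unit effect that is
maximal among exposed faces. -/
def IsActualFace (d : ℕ) (E F : Set (Fin (d + 1) → ℝ)) : Prop :=
  IsExposedFace E F ∧ unit d ∈ F ∧ ∀ F', IsExposedFace E F' → ¬F ⊂ F'

/-- A minimal exposed face of a convex set. -/
def IsMinimalExposedFace {n : ℕ} (C M : Set (Fin n → ℝ)) : Prop :=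
  IsExposedFace C M ∧ ∀ N, IsExposedFace C N → M ∩ N = M ∨ M ∩ N = ∅

/-- Intermediate determinism: every extreme (pure) state of `S` is uniquely identified among
states in `S` by its actual set of effects in `𝓔`. -/
def IntermediateDeterminism (d : ℕ) (S E : Set (Fin (d + 1) → ℝ)) : Prop :=
  ∀ ω ∈ S.extremePoints ℝ, ∀ ω' ∈ S, actualSet E ω' = actualSet E ω → ω' = ω

end GPT

section Aux
open GPT Submodule Module

variable {d n : ℕ}

lemma dot_comm (x y : Fin n → ℝ) : dot x y = dot y x := by
  simp [dot, mul_comm]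

/-- `dot v ·` as a linear map. -/
def dotL (v : Fin n → ℝ) : (Fin n → ℝ) →ₗ[ℝ] ℝ where
  toFun x := dot v x
  map_add' x y := by simp [dot, mul_add, Finset.sum_add_distrib]
  map_smul' c x := by simp [dot, Finset.mul_sum, mul_left_comm]

@[simp] lemma dotL_apply (v x : Fin n → ℝ) : dotL v x = dot v x := rfl

lemma dot_add_left (x y z : Fin n → ℝ) : dot (x + y) z = dot x z + dot y z := by
  rw [dot_comm, dot_comm x z, dot_comm y z]; exact map_add (dotL z) x y

lemma dot_smul_left (c : ℝ) (x y : Fin n → ℝ) : dot (c • x) y = c * dot x y := by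
  rw [dot_comm, dot_comm x y]; exact map_smul (dotL y) c x

lemma dot_sub_right (x y z : Fin n → ℝ) : dot x (y - z) = dot x y - dot x z :=
  map_sub (dotL x) y z

lemma dot_combo (e x y : Fin n → ℝ) (a b : ℝ) :
    dot e (a • x + b • y) = a * dot e x + b * dot e y := by
  have := map_add (dotL e) (a • x) (b • y)
  simp only [dotL_apply, map_smul, smul_eq_mul, dotL] at this ⊢
  exact (map_add (dotL e) (a • x) (b • y)).trans (by simp only [map_smul, smul_eq_mul, dotL_apply])

@[simp] lemma dot_zero_left (x : Fin n → ℝ) : dot 0 x = 0 := by simp [dot]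

@[simp] lemma dot_zero_right (x : Fin n → ℝ) : dot x 0 = 0 := by simp [dot]

lemma dot_unit_left (ω : Fin (d+1) → ℝ) : dot (unit d) ω = ω (Fin.last d) := by
  simp [dot, unit, ite_mul]

lemma dot_unit_right (e : Fin (d+1) → ℝ) : dot e (unit d) = e (Fin.last d) := by
  rw [dot_comm]; exact dot_unit_left e

lemma dot_sum_left (C : Finset (Fin n → ℝ)) (x : Fin n → ℝ) :
    dot (∑ e ∈ C, e) x = ∑ e ∈ C, dot e x := by
  rw [dot_comm, show dot x (∑ e ∈ C, e) = dotL x (∑ e ∈ C, e) from rfl, map_sum]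
  exact Finset.sum_congr rfl fun e _ => dot_comm x e

lemma eq_zero_of_dot_self (x : Fin n → ℝ) (h : dot x x = 0) : x = 0 := by
  have := (Finset.sum_eq_zero_iff_of_nonneg (fun i _ => mul_self_nonneg (x i))).1 h
  funext i
  exact mul_self_eq_zero.1 (this i (Finset.mem_univ i))

lemma cont_dot (v : Fin n → ℝ) : Continuous fun x : Fin n → ℝ => dot v x := by
  unfold dot
  exact continuous_finset_sum _ fun i _ => continuous_const.mul (continuous_apply i)

lemma clm_eq_dot (f : (Fin n → ℝ) →L[ℝ] ℝ) : ∃ g : Fin n → ℝ, ∀ x, f x = dot g x := by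
  refine ⟨fun i => f (Pi.single i 1), fun x => ?_⟩
  have hx : x = ∑ i, x i • (Pi.single i (1:ℝ) : Fin n → ℝ) := by
    funext j
    simp [Pi.single_apply, Finset.sum_apply]
  conv_lhs => rw [hx]
  rw [map_sum]
  simp only [map_smul, smul_eq_mul]
  simp [dot, mul_comm]

end Aux
section Aux2
open GPT Submodule Module

variable {d n : ℕ}

lemma not_mem_span {Z : Set (Fin n → ℝ)} {g h y₀ : Fin n → ℝ}
    (hgZ : ∀ z ∈ Z, dot g z = 1) (hhZ : ∀ z ∈ Z, dot h z = 1)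
    (hgy : dot g y₀ = 1) (hhy : dot h y₀ ≠ 1) : y₀ ∉ span ℝ Z := by
  intro hmem
  have hker : span ℝ Z ≤ LinearMap.ker (dotL h - dotL g) := by
    rw [span_le]
    intro z hz
    simp [LinearMap.mem_ker, LinearMap.sub_apply, hgZ z hz, hhZ z hz]
  have h0 := hker hmem
  
  exact hhy (by rw [LinearMap.mem_ker, LinearMap.sub_apply, dotL_apply, dotL_apply, hgy] at h0; linarith)

lemma rank_lt {Z Y : Set (Fin n → ℝ)} (hZY : Z ⊆ Y) {g h y₀ : Fin n → ℝ}
    (hg : ∀ y ∈ Y, dot g y = 1) (hh : ∀ z ∈ Z, dot h z = 1)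
    (hy₀ : y₀ ∈ Y) (hne : dot h y₀ ≠ 1) :
    finrank ℝ (span ℝ Z) < finrank ℝ (span ℝ Y) := by
  apply Submodule.finrank_lt_finrank_of_lt
  refine lt_of_le_of_ne (span_mono hZY) fun heq => ?_
  exact not_mem_span (fun z hz => hg z (hZY hz)) hh (hg y₀ hy₀) hne
    (heq ▸ subset_span hy₀)

/-- Any intersection of faces `{σ | e·σ = 1}`, `e ∈ A`, of `S` is cut out by finitely many. -/
lemma finite_subface (S A : Set (Fin (d+1) → ℝ)) (hlast : ∀ σ ∈ S, σ (Fin.last d) = 1)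
    (hA : ∀ e ∈ A, ∀ σ ∈ S, dot e σ ≤ 1) :
    ∃ C : Finset (Fin (d+1) → ℝ), ↑C ⊆ A ∧
      {σ ∈ S | ∀ e ∈ C, dot e σ = 1} = {σ ∈ S | ∀ e ∈ A, dot e σ = 1} := by
  suffices H : ∀ (k : ℕ) (B : Finset (Fin (d+1) → ℝ)), ↑B ⊆ A →
      finrank ℝ (span ℝ {σ ∈ S | ∀ e ∈ B, dot e σ = 1}) ≤ k →
      ∃ C : Finset (Fin (d+1) → ℝ), ↑C ⊆ A ∧
        {σ ∈ S | ∀ e ∈ C, dot e σ = 1} = {σ ∈ S | ∀ e ∈ A, dot e σ = 1} by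
    exact H _ ∅ (by simp) le_rfl
  intro k
  induction k with
  | zero =>
    intro B hB hr
    refine ⟨B, hB, ?_⟩
    by_contra hne
    have hsub : {σ ∈ S | ∀ e ∈ A, dot e σ = 1} ⊆ {σ ∈ S | ∀ e ∈ B, dot e σ = 1} :=
      fun σ hσ => ⟨hσ.1, fun e he => hσ.2 e (hB he)⟩
    obtain ⟨σ₀, hσ₀B, hσ₀A⟩ : ∃ σ₀, σ₀ ∈ {σ ∈ S | ∀ e ∈ B, dot e σ = 1} ∧
        σ₀ ∉ {σ ∈ S | ∀ e ∈ A, dot e σ = 1} := by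
      rcases Set.exists_of_ssubset (ssubset_of_subset_of_ne hsub (Ne.symm hne)) with ⟨x, hx1, hx2⟩
      exact ⟨x, hx1, hx2⟩
    have hσ₀S : σ₀ ∈ S := hσ₀B.1
    have : ∃ e ∈ A, dot e σ₀ ≠ 1 := by
      by_contra hc; push_neg at hc; exact hσ₀A ⟨hσ₀S, hc⟩
    obtain ⟨e, heA, hedot⟩ := this
    have hZY : {σ ∈ S | ∀ f ∈ insert e B, dot f σ = 1} ⊆ {σ ∈ S | ∀ f ∈ B, dot f σ = 1} :=
      fun σ hσ => ⟨hσ.1, fun f hf => hσ.2 f (Finset.mem_insert_of_mem hf)⟩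
    have := rank_lt hZY (g := unit d) (h := e)
      (fun y hy => by rw [dot_unit_left]; exact hlast y hy.1)
      (fun z hz => hz.2 e (Finset.mem_insert_self e B)) hσ₀B hedot
    omega
  | succ k ih =>
    intro B hB hr
    by_cases heq : {σ ∈ S | ∀ e ∈ B, dot e σ = 1} = {σ ∈ S | ∀ e ∈ A, dot e σ = 1}
    · exact ⟨B, hB, heq⟩
    · have hsub : {σ ∈ S | ∀ e ∈ A, dot e σ = 1} ⊆ {σ ∈ S | ∀ e ∈ B, dot e σ = 1} :=
        fun σ hσ => ⟨hσ.1, fun e he => hσ.2 e (hB he)⟩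
      obtain ⟨σ₀, hσ₀B, hσ₀A⟩ : ∃ σ₀, σ₀ ∈ {σ ∈ S | ∀ e ∈ B, dot e σ = 1} ∧
          σ₀ ∉ {σ ∈ S | ∀ e ∈ A, dot e σ = 1} := by
        rcases Set.exists_of_ssubset (ssubset_of_subset_of_ne hsub (Ne.symm heq)) with ⟨x, hx1, hx2⟩
        exact ⟨x, hx1, hx2⟩
      have hσ₀S : σ₀ ∈ S := hσ₀B.1
      have : ∃ e ∈ A, dot e σ₀ ≠ 1 := by
        by_contra hc; push_neg at hc; exact hσ₀A ⟨hσ₀S, hc⟩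
      obtain ⟨e, heA, hedot⟩ := this
      have hZY : {σ ∈ S | ∀ f ∈ insert e B, dot f σ = 1} ⊆ {σ ∈ S | ∀ f ∈ B, dot f σ = 1} :=
        fun σ hσ => ⟨hσ.1, fun f hf => hσ.2 f (Finset.mem_insert_of_mem hf)⟩
      have hlt := rank_lt hZY (g := unit d) (h := e)
        (fun y hy => by rw [dot_unit_left]; exact hlast y hy.1)
        (fun z hz => hz.2 e (Finset.mem_insert_self e B)) hσ₀B hedot
      exact ih (insert e B) (by
        rw [Finset.coe_insert]
        exact Set.insert_subset heA hB) (by omega)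

end Aux2
section Aux3
open GPT Submodule Module

variable {d : ℕ} {S 𝓔 : Set (Fin (d + 1) → ℝ)}

lemma unit_mem_unrestricted (hS : IsStateSpace d S) : unit d ∈ unrestricted d S := by
  intro ω hω
  rw [dot_unit_left, hS.2.2.2 ω hω]
  norm_num

lemma dot_unit_state (hS : IsStateSpace d S) {σ : Fin (d+1) → ℝ} (hσ : σ ∈ S) :
    dot (unit d) σ = 1 := by rw [dot_unit_left]; exact hS.2.2.2 σ hσ

lemma sub_mem_unrestricted {e : Fin (d+1) → ℝ} (hS : IsStateSpace d S)
    (he : e ∈ unrestricted d S) : unit d - e ∈ unrestricted d S := by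
  intro ω hω
  rw [show unit d - e = unit d - e from rfl, dot_comm, dot_sub_right, dot_comm ω (unit d),
    dot_comm ω e, dot_unit_state hS hω]
  rcases he ω hω with ⟨h1, h2⟩
  constructor <;> linarith

lemma faceX_isExtreme (A : Set (Fin (d+1) → ℝ)) (hA : ∀ e ∈ A, ∀ σ ∈ S, dot e σ ≤ 1) :
    IsExtreme ℝ S {σ ∈ S | ∀ e ∈ A, dot e σ = 1} := by
  constructor
  · exact fun σ hσ => hσ.1
  rintro x hx y hy z ⟨hzS, hz⟩ ⟨a, b, ha, hb, hab, hzeq⟩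
  have key : ∀ e ∈ A, dot e x = 1 ∧ dot e y = 1 := by
    intro e he
    have h1 := hz e he
    rw [← hzeq, dot_combo] at h1
    have hx1 := hA e he x hx
    have hy1 := hA e he y hy
    constructor <;> nlinarith
  exact ⟨hx, fun e he => (key e he).1⟩

lemma faceX_compact (hScpt : IsCompact S) (A : Set (Fin (d+1) → ℝ)) :
    IsCompact {σ ∈ S | ∀ e ∈ A, dot e σ = 1} := by
  have heq : {σ ∈ S | ∀ e ∈ A, dot e σ = 1} = S ∩ ⋂ e ∈ A, {σ | dot e σ = 1} := by
    ext σ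
    simp only [Set.mem_inter_iff, Set.mem_iInter, Set.mem_setOf_eq]
  rw [heq]
  exact hScpt.inter_right (isClosed_biInter fun e _ => isClosed_eq (cont_dot e) continuous_const)

lemma faceX_convex (hconv : Convex ℝ S) (A : Set (Fin (d+1) → ℝ)) :
    Convex ℝ {σ ∈ S | ∀ e ∈ A, dot e σ = 1} := by
  intro x hx y hy a b ha hb hab
  refine ⟨hconv hx.1 hy.1 ha hb hab, fun e he => ?_⟩
  rw [dot_combo, hx.2 e he, hy.2 e he]
  linarith

lemma mid_dot {e σ ρ : Fin (d+1) → ℝ} (hes : dot e σ ≤ 1) (her : dot e ρ ≤ 1) :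
    dot e ((1/2 : ℝ) • σ + (1/2 : ℝ) • ρ) = 1 ↔ dot e σ = 1 ∧ dot e ρ = 1 := by
  rw [dot_combo]
  constructor
  · intro h; constructor <;> linarith
  · rintro ⟨h1, h2⟩; rw [h1, h2]; norm_num

lemma mid_eq {σ ρ : Fin (d+1) → ℝ} (h : (1/2 : ℝ) • σ + (1/2 : ℝ) • ρ = σ) : ρ = σ := by
  funext i
  have := congrFun h i
  simp only [Pi.add_apply, Pi.smul_apply, smul_eq_mul] at this
  linarith

lemma mid_mem (hS : IsStateSpace d S) {σ ρ : Fin (d+1) → ℝ} (hσ : σ ∈ S) (hρ : ρ ∈ S) :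
    (1/2 : ℝ) • σ + (1/2 : ℝ) • ρ ∈ S :=
  hS.2.2.1 hσ hρ (by norm_num) (by norm_num) (by norm_num)

lemma exposedface_actualSet (hS : IsStateSpace d S) {ω : Fin (d+1) → ℝ} (hω : ω ∈ S) :
    IsExposedFace (unrestricted d S) (actualSet (unrestricted d S) ω) := by
  refine ⟨⟨unit d, unit_mem_unrestricted hS, dot_unit_state hS hω⟩, ω, 1, ?_, ?_, ?_⟩
  · intro h0
    have := congrFun h0 (Fin.last d)
    rw [hS.2.2.2 ω hω] at this
    simpa using this
  · intro e he
    rw [dot_comm]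
    exact (he ω hω).2
  · ext e
    simp only [actualSet, Set.mem_setOf_eq]
    rw [dot_comm]

/-- A state exposed by `(h, m)` is exposed by a genuine effect in `E(S)`. -/
lemma expo (hS : IsStateSpace d S) {ω : Fin (d+1) → ℝ} (hexp : IsExposedPoint S ω) :
    ∃ e₀ ∈ unrestricted d S, dot e₀ ω = 1 ∧ ∀ σ ∈ S, dot e₀ σ = 1 → σ = ω := by
  obtain ⟨-, h, m, hh0, hle, heq⟩ := hexp
  have hωset : ω ∈ {x ∈ S | dot h x = m} := heq ▸ rfl
  have hωS : ω ∈ S := hωset.1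
  have hωm : dot h ω = m := hωset.2
  obtain ⟨σm, hσm, hmin⟩ := hS.2.1.exists_isMinOn hS.1 (cont_dot h).continuousOn
  set b := dot h σm with hb
  set t := max (-b) (-m) + 1 with ht
  have hc : (0:ℝ) < m + t := by
    have := le_max_right (-b) (-m); simp only [ht]; linarith
  have hbt : (0:ℝ) < b + t := by
    have := le_max_left (-b) (-m); simp only [ht]; linarith
  refine ⟨(m+t)⁻¹ • (h + t • unit d), ?_, ?_, ?_⟩
  · intro σ hσ
    rw [dot_smul_left, dot_add_left, dot_smul_left, dot_unit_state hS hσ]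
    have h1 : dot h σ ≤ m := hle σ hσ
    have h2 : b ≤ dot h σ := hmin hσ
    constructor
    · have hinv : (0:ℝ) ≤ (m+t)⁻¹ := inv_nonneg.2 hc.le
      have : (0:ℝ) ≤ dot h σ + t * 1 := by linarith
      positivity
    · calc (m+t)⁻¹ * (dot h σ + t*1) ≤ (m+t)⁻¹ * (m+t) :=
            mul_le_mul_of_nonneg_left (by linarith) (inv_nonneg.2 hc.le)
        _ = 1 := inv_mul_cancel₀ (ne_of_gt hc)
  · rw [dot_smul_left, dot_add_left, dot_smul_left, dot_unit_state hS hωS, hωm]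
    field_simp
  · intro σ hσ hdot
    rw [dot_smul_left, dot_add_left, dot_smul_left, dot_unit_state hS hσ] at hdot
    have : dot h σ = m := by
      have hne : m + t ≠ 0 := ne_of_gt hc
      field_simp at hdot
      linarith
    have : σ ∈ {x ∈ S | dot h x = m} := ⟨hσ, this⟩
    rw [← heq] at this
    exact this

end Aux3
section Aux4
open GPT Submodule Module

variable {d : ℕ} {S 𝓔 : Set (Fin (d + 1) → ℝ)}

/-- Every exposed face of `E(S)` containing `u` is the actual set of some state in `S`. -/
lemma norm_face {F : Set (Fin (d+1) → ℝ)} (hS : IsStateSpace d S)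
    (h𝓔 : IsEffectSpace d S 𝓔) (hF : IsExposedFace (unrestricted d S) F)
    (huF : unit d ∈ F) : ∃ ρ ∈ S, F = actualSet (unrestricted d S) ρ := by
  obtain ⟨hne, h, m, hh0, hle, hFeq⟩ := hF
  obtain ⟨hSne, hScpt, hSconv, hlast⟩ := hS
  have hS' : IsStateSpace d S := ⟨hSne, hScpt, hSconv, hlast⟩
  have huh : dot h (unit d) = m := by
    rw [hFeq] at huF; exact huF.2
  have hnonneg : ∀ e ∈ unrestricted d S, 0 ≤ dot h e := by
    intro e he
    have h1 := hle _ (sub_mem_unrestricted hS' he)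
    rw [dot_sub_right, huh] at h1
    linarith
  have hm0 : 0 < m := by
    have hm0' : 0 ≤ m := by
      have h0U : (0 : Fin (d+1) → ℝ) ∈ unrestricted d S := by
        intro ω hω; simp
      have := hle 0 h0U
      simpa using this
    rcases lt_or_eq_of_le hm0' with h' | h'
    · exact h'
    · exfalso
      have hall : ∀ e ∈ 𝓔, dot h e = 0 := fun e he =>
        le_antisymm (h' ▸ hle e (h𝓔.1 he)) (hnonneg e (h𝓔.1 he))
      have hker : span ℝ 𝓔 ≤ LinearMap.ker (dotL h) := by
        rw [span_le]
        intro e he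
        simp [LinearMap.mem_ker, hall e he]
      rw [h𝓔.2.2.2.2.2] at hker
      have : dot h h = 0 := hker (mem_top)
      exact hh0 (eq_zero_of_dot_self h this)
  set ρ := m⁻¹ • h with hρdef
  have hdotρ : ∀ e, dot e ρ = m⁻¹ * dot h e := by
    intro e
    rw [dot_comm, hρdef, dot_smul_left]
  have hρ_ub : ∀ e ∈ unrestricted d S, dot e ρ ≤ 1 := by
    intro e he
    rw [hdotρ]
    calc m⁻¹ * dot h e ≤ m⁻¹ * m :=
          mul_le_mul_of_nonneg_left (hle e he) (inv_nonneg.2 hm0.le)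
      _ = 1 := inv_mul_cancel₀ (ne_of_gt hm0)
  have hρlast : ρ (Fin.last d) = 1 := by
    have : dot h (unit d) = h (Fin.last d) := dot_unit_right h
    have hh : h (Fin.last d) = m := by rw [← this, huh]
    rw [hρdef]
    simp only [Pi.smul_apply, smul_eq_mul, hh]
    exact inv_mul_cancel₀ (ne_of_gt hm0)
  have hρS : ρ ∈ S := by
    by_contra hρ
    obtain ⟨f, s, hfs, hsρ⟩ := geometric_hahn_banach_closed_point hSconv hScpt.isClosed hρ
    obtain ⟨g, hg⟩ := clm_eq_dot f
    obtain ⟨σm, hσm, hmin⟩ := hScpt.exists_isMinOn hSne (cont_dot g).continuousOn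
    set b := dot g σm with hb
    set t := max (-b) (-s) + 1 with ht
    have hc : (0:ℝ) < s + t := by
      have := le_max_right (-b) (-s); simp only [ht]; linarith
    have hbt : (0:ℝ) < b + t := by
      have := le_max_left (-b) (-s); simp only [ht]; linarith
    set e₁ := (s+t)⁻¹ • (g + t • unit d) with he₁def
    have hdot₁ : ∀ x : Fin (d+1) → ℝ, dot e₁ x = (s+t)⁻¹ * (dot g x + t * x (Fin.last d)) := by
      intro x
      rw [he₁def, dot_smul_left, dot_add_left, dot_smul_left, dot_unit_left]
    have he₁U : e₁ ∈ unrestricted d S := by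
      intro σ hσ
      rw [hdot₁, hlast σ hσ]
      have h1 : dot g σ < s := by rw [← hg]; exact hfs σ hσ
      have h2 : b ≤ dot g σ := hmin hσ
      constructor
      · have h3 : (0:ℝ) ≤ (s+t)⁻¹ := inv_nonneg.2 hc.le
        have h4 : (0:ℝ) ≤ dot g σ + t * 1 := by linarith
        positivity
      · calc (s+t)⁻¹ * (dot g σ + t*1) ≤ (s+t)⁻¹ * (s+t) :=
              mul_le_mul_of_nonneg_left (by linarith) (inv_nonneg.2 hc.le)
          _ = 1 := inv_mul_cancel₀ (ne_of_gt hc)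
    have hub := hρ_ub e₁ he₁U
    rw [hdot₁, hρlast] at hub
    have hgρ : s < dot g ρ := by rw [← hg]; exact hsρ
    have : (s+t)⁻¹ * (s+t) < (s+t)⁻¹ * (dot g ρ + t * 1) := by
      apply mul_lt_mul_of_pos_left (by linarith) (inv_pos.2 hc)
    rw [inv_mul_cancel₀ (ne_of_gt hc)] at this
    linarith
  refine ⟨ρ, hρS, ?_⟩
  rw [hFeq]
  ext e
  simp only [actualSet, Set.mem_setOf_eq]
  constructor
  · rintro ⟨heU, hhe⟩
    refine ⟨heU, ?_⟩
    rw [hdotρ, hhe]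
    exact inv_mul_cancel₀ (ne_of_gt hm0)
  · rintro ⟨heU, hre⟩
    refine ⟨heU, ?_⟩
    rw [hdotρ] at hre
    field_simp at hre
    linarith

/-- The actual set in `E(S)` of an exposed point of `S` is an actual face of `E(S)`. -/
lemma actual_of_exposed (hS : IsStateSpace d S) (h𝓔 : IsEffectSpace d S 𝓔)
    {ω : Fin (d+1) → ℝ} (hωS : ω ∈ S) (hexp : IsExposedPoint S ω) :
    IsActualFace d (unrestricted d S) (actualSet (unrestricted d S) ω) := by
  obtain ⟨e₀, he₀U, he₀ω, huniq⟩ := expo hS hexp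
  have humem : unit d ∈ actualSet (unrestricted d S) ω :=
    ⟨unit_mem_unrestricted hS, dot_unit_state hS hωS⟩
  refine ⟨exposedface_actualSet hS hωS, humem, ?_⟩
  intro F' hF' hss
  have huF' : unit d ∈ F' := hss.1 humem
  obtain ⟨ρ, hρS, hF'eq⟩ := norm_face hS h𝓔 hF' huF'
  have he₀F' : e₀ ∈ F' := hss.1 ⟨he₀U, he₀ω⟩
  rw [hF'eq] at he₀F'
  have hρω : ρ = ω := huniq ρ hρS he₀F'.2
  exact hss.2 (by rw [hF'eq, hρω])

end Aux4
open GPT in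
/-- A GPT system `(S, 𝓔)` satisfies intermediate determinism iff (i) for every
pair of distinct actual faces `F`, `F'` of `E(S)`, `F ∩ 𝓔 ⊄ F' ∩ 𝓔`, and (ii) every extreme
point of `S` is an exposed point of `S`. -/
theorem stmt_0 (d : ℕ) (hd : 1 ≤ d) (S 𝓔 : Set (Fin (d + 1) → ℝ))
    (hS : IsStateSpace d S) (h𝓔 : IsEffectSpace d S 𝓔) :
    IntermediateDeterminism d S 𝓔 ↔
      ((∀ F F' : Set (Fin (d + 1) → ℝ), IsActualFace d (unrestricted d S) F →
          IsActualFace d (unrestricted d S) F' → F ≠ F' → ¬(F ∩ 𝓔 ⊆ F' ∩ 𝓔)) ∧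
        ∀ ω ∈ S.extremePoints ℝ, IsExposedPoint S ω) := by
  constructor
  · intro hID
    constructor
    · -- condition (i)
      intro F F' hF hF' hne hsub
      obtain ⟨ω₀, hω₀S, hFeq⟩ := norm_face hS h𝓔 hF.1 hF.2.1
      obtain ⟨ω', hω'S, hF'eq⟩ := norm_face hS h𝓔 hF'.1 hF'.2.1
      have hFU : F ⊆ unrestricted d S := by
        rw [hFeq]; exact fun e he => he.1
      have hFle : ∀ e ∈ F, ∀ σ ∈ S, dot e σ ≤ 1 := fun e he σ hσ => (hFU he σ hσ).2
      have hXne : {σ ∈ S | ∀ e ∈ F, dot e σ = 1}.Nonempty :=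
        ⟨ω₀, hω₀S, fun e he => by rw [hFeq] at he; exact he.2⟩
      obtain ⟨σ, hσX⟩ := (faceX_compact hS.2.1 F).extremePoints_nonempty hXne
      have hσextS : σ ∈ S.extremePoints ℝ :=
        (faceX_isExtreme F hFle).extremePoints_subset_extremePoints hσX
      have hσS : σ ∈ S := hσextS.1
      have hσmem : σ ∈ {σ ∈ S | ∀ e ∈ F, dot e σ = 1} := hσX.1
      have hFσ : F = actualSet (unrestricted d S) σ := by
        have hsub' : F ⊆ actualSet (unrestricted d S) σ := fun e he => ⟨hFU he, hσmem.2 e he⟩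
        by_contra hne'
        exact hF.2.2 _ (exposedface_actualSet hS hσS) (ssubset_of_subset_of_ne hsub' hne')
      have hσ'S : (1/2:ℝ) • σ + (1/2:ℝ) • ω' ∈ S := mid_mem hS hσS hω'S
      have hsame : actualSet 𝓔 ((1/2:ℝ) • σ + (1/2:ℝ) • ω') = actualSet 𝓔 σ := by
        ext e
        simp only [actualSet, Set.mem_setOf_eq]
        constructor
        · rintro ⟨he𝓔, hdot⟩
          have heU := h𝓔.1 he𝓔
          rw [mid_dot (heU σ hσS).2 (heU ω' hω'S).2] at hdot
          exact ⟨he𝓔, hdot.1⟩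
        · rintro ⟨he𝓔, hdot⟩
          have heU := h𝓔.1 he𝓔
          have heF : e ∈ F ∩ 𝓔 := ⟨by rw [hFσ]; exact ⟨heU, hdot⟩, he𝓔⟩
          have heF' := hsub heF
          have hdω' : dot e ω' = 1 := by
            have h1 := heF'.1
            rw [hF'eq] at h1
            exact h1.2
          exact ⟨he𝓔, by rw [mid_dot (heU σ hσS).2 (heU ω' hω'S).2]; exact ⟨hdot, hdω'⟩⟩
      have hσ'σ := hID σ hσextS _ hσ'S hsame
      have hω'σ : ω' = σ := mid_eq hσ'σ
      exact hne (by rw [hFσ, hF'eq, hω'σ])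
    · -- condition (ii)
      intro ω hωext
      have hωS : ω ∈ S := hωext.1
      have hAle : ∀ e ∈ actualSet (unrestricted d S) ω, ∀ σ ∈ S, dot e σ ≤ 1 :=
        fun e he σ hσ => (he.1 σ hσ).2
      by_cases hXA : {σ ∈ S | ∀ e ∈ actualSet (unrestricted d S) ω, dot e σ = 1} = {ω}
      · obtain ⟨C, hCA, hCeq⟩ := finite_subface S (actualSet (unrestricted d S) ω)
          hS.2.2.2 hAle
        have hc : (0:ℝ) < (C.card : ℝ) + 1 := by positivity
        set e₁ := ((C.card : ℝ) + 1)⁻¹ • (unit d + ∑ e ∈ C, e) with he₁def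
        have hdot₁ : ∀ x ∈ S, dot e₁ x = ((C.card : ℝ) + 1)⁻¹ * (1 + ∑ e ∈ C, dot e x) := by
          intro x hx
          rw [he₁def, dot_smul_left, dot_add_left, dot_unit_state hS hx, dot_sum_left]
        have hCω : ∀ e ∈ C, dot e ω = 1 := fun e he => (hCA he).2
        have hdotω : dot e₁ ω = 1 := by
          rw [hdot₁ ω hωS, Finset.sum_congr rfl hCω, Finset.sum_const, nsmul_eq_mul, mul_one]
          rw [add_comm (1:ℝ)]
          exact inv_mul_cancel₀ (ne_of_gt hc)
        refine ⟨Set.singleton_nonempty ω, e₁, 1, ?_, ?_, ?_⟩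
        · intro h0
          rw [h0] at hdotω
          simp at hdotω
        · intro x hx
          rw [hdot₁ x hx]
          have hsum : ∑ e ∈ C, dot e x ≤ (C.card : ℝ) := by
            have := Finset.sum_le_card_nsmul C (fun e => dot e x) 1
              (fun e he => hAle e (hCA he) x hx)
            simpa using this
          calc ((C.card : ℝ) + 1)⁻¹ * (1 + ∑ e ∈ C, dot e x)
              ≤ ((C.card : ℝ) + 1)⁻¹ * ((C.card : ℝ) + 1) :=
                mul_le_mul_of_nonneg_left (by linarith) (inv_nonneg.2 hc.le)
            _ = 1 := inv_mul_cancel₀ (ne_of_gt hc)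
        · ext x
          simp only [Set.mem_singleton_iff, Set.mem_setOf_eq]
          constructor
          · rintro rfl
            exact ⟨hωS, hdotω⟩
          · rintro ⟨hxS, hxdot⟩
            have hsum : ∑ e ∈ C, dot e x = (C.card : ℝ) := by
              rw [hdot₁ x hxS] at hxdot
              field_simp at hxdot
              linarith
            have hall : ∀ e ∈ C, dot e x = 1 := by
              have hzero : ∑ e ∈ C, (1 - dot e x) = 0 := by
                rw [Finset.sum_sub_distrib, Finset.sum_const, nsmul_eq_mul, mul_one, hsum]
                ring
              intro e he
              have := (Finset.sum_eq_zero_iff_of_nonneg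
                (fun e he => by linarith [hAle e (hCA he) x hxS])).1 hzero e he
              linarith
            have : x ∈ {σ ∈ S | ∀ e ∈ actualSet (unrestricted d S) ω, dot e σ = 1} := by
              rw [← hCeq]
              exact ⟨hxS, hall⟩
            rw [hXA] at this
            exact this
      · have hωXA : ω ∈ {σ ∈ S | ∀ e ∈ actualSet (unrestricted d S) ω, dot e σ = 1} :=
          ⟨hωS, fun e he => he.2⟩
        have hex : ∃ ψ ∈ {σ ∈ S | ∀ e ∈ actualSet (unrestricted d S) ω, dot e σ = 1}, ψ ≠ ω := by
          by_contra hc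
          push_neg at hc
          exact hXA (Set.eq_singleton_iff_unique_mem.2 ⟨hωXA, hc⟩)
        obtain ⟨ψ, hψ, hψne⟩ := hex
        have hmidS : (1/2:ℝ) • ω + (1/2:ℝ) • ψ ∈ S := mid_mem hS hωS hψ.1
        have hsame : actualSet 𝓔 ((1/2:ℝ) • ω + (1/2:ℝ) • ψ) = actualSet 𝓔 ω := by
          ext e
          simp only [actualSet, Set.mem_setOf_eq]
          constructor
          · rintro ⟨he𝓔, hdot⟩
            have heU := h𝓔.1 he𝓔
            rw [mid_dot (heU ω hωS).2 (heU ψ hψ.1).2] at hdot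
            exact ⟨he𝓔, hdot.1⟩
          · rintro ⟨he𝓔, hdot⟩
            have heU := h𝓔.1 he𝓔
            have hdψ : dot e ψ = 1 := hψ.2 e ⟨heU, hdot⟩
            exact ⟨he𝓔, by rw [mid_dot (heU ω hωS).2 (heU ψ hψ.1).2]; exact ⟨hdot, hdψ⟩⟩
        have := hID ω hωext _ hmidS hsame
        exact absurd (mid_eq this) hψne
  · rintro ⟨hi, hii⟩ ω hωext ω' hω'S ha
    have hωS : ω ∈ S := hωext.1
    obtain ⟨e₀, he₀U, he₀ω, huniq⟩ := expo hS (hii ω hωext)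
    have hFωact := actual_of_exposed hS h𝓔 hωS (hii ω hωext)
    have hA'le : ∀ e ∈ actualSet (unrestricted d S) ω', ∀ σ ∈ S, dot e σ ≤ 1 :=
      fun e he σ hσ => (he.1 σ hσ).2
    have hextr : {σ ∈ S | ∀ e ∈ actualSet (unrestricted d S) ω', dot e σ = 1}.extremePoints ℝ
        ⊆ {ω} := by
      intro σ hσ
      have hσextS : σ ∈ S.extremePoints ℝ :=
        (faceX_isExtreme _ hA'le).extremePoints_subset_extremePoints hσ
      have hσS : σ ∈ S := hσextS.1
      have hσact := actual_of_exposed hS h𝓔 hσS (hii σ hσextS)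
      have hsub : actualSet (unrestricted d S) ω ∩ 𝓔 ⊆ actualSet (unrestricted d S) σ ∩ 𝓔 := by
        intro e he
        have he𝓔 : e ∈ 𝓔 := he.2
        have heω : e ∈ actualSet 𝓔 ω := ⟨he𝓔, he.1.2⟩
        rw [← ha] at heω
        have heA' : e ∈ actualSet (unrestricted d S) ω' := ⟨h𝓔.1 he𝓔, heω.2⟩
        exact ⟨⟨h𝓔.1 he𝓔, hσ.1.2 e heA'⟩, he𝓔⟩
      have heqF : actualSet (unrestricted d S) ω = actualSet (unrestricted d S) σ := by
        by_contra hne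
        exact hi _ _ hFωact hσact hne hsub
      have he₀σ : e₀ ∈ actualSet (unrestricted d S) σ := heqF ▸ ⟨he₀U, he₀ω⟩
      exact Set.mem_singleton_iff.2 (huniq σ hσS he₀σ.2)
    have hX'cl : {σ ∈ S | ∀ e ∈ actualSet (unrestricted d S) ω', dot e σ = 1} ⊆ {ω} := by
      have hKM := closure_convexHull_extremePoints
        (faceX_compact hS.2.1 (actualSet (unrestricted d S) ω'))
        (faceX_convex hS.2.2.1 (actualSet (unrestricted d S) ω'))
      calc {σ ∈ S | ∀ e ∈ actualSet (unrestricted d S) ω', dot e σ = 1}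
          = closure (convexHull ℝ
              ({σ ∈ S | ∀ e ∈ actualSet (unrestricted d S) ω', dot e σ = 1}.extremePoints ℝ)) :=
            hKM.symm
        _ ⊆ closure (convexHull ℝ {ω}) := closure_mono (convexHull_mono hextr)
        _ = {ω} := by rw [convexHull_singleton, closure_singleton]
    exact hX'cl ⟨hω'S, fun e he => he.2⟩
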